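/- Let G_1,...,G_r be subgroups of S_n, each not contained in A_n, such that G = G_1·G_2···G_r is an internal direct product. Let g = g_1···g_r ∈ G ∩ A_n with g_j ∈ G_j. Then C_G(g) = C_{G∩A_n}(g) if and only if C_{G_j}(g_j) = C_{G_j ∩ A_n}(g_j) and g_j ∈ A_n for all j. -/
import Mathlib

section Aux

variable {M : Type*} [Group M]

lemma aux_ofFn_mul : ∀ {r : ℕ} (G : Fin r → Subgroup M),
    (∀ i j, i ≠ j → ∀ x ∈ G i, ∀ y ∈ G j, Commute x y) →
    ∀ (a b : Fin r → M), (∀ j, a j ∈ G j) → (∀ j, b j ∈ G j) →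
    (List.ofFn fun j => a j * b j).prod = (List.ofFn a).prod * (List.ofFn b).prod := by
  intro r
  induction r with
  | zero => intro G hcomm a b ha hb; simp
  | succ m ih =>
    intro G hcomm a b ha hb
    have ih' := ih (fun i => G i.succ)
      (fun i j hij x hx y hy => hcomm i.succ j.succ (fun h => hij (Fin.succ_injective _ h)) x hx y hy)
      (fun i => a i.succ) (fun i => b i.succ) (fun i => ha i.succ) (fun i => hb i.succ)
    have hc : Commute (b 0) (List.ofFn fun i : Fin m => a i.succ).prod := by
      apply Commute.list_prod_right
      intro x hx
      rw [List.mem_ofFn] at hx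
      obtain ⟨i, rfl⟩ := hx
      exact hcomm 0 i.succ (Fin.succ_ne_zero i).symm _ (hb 0) _ (ha i.succ)
    simp only [List.ofFn_succ, List.prod_cons, ih']
    calc a 0 * b 0 * ((List.ofFn fun i : Fin m => a i.succ).prod *
          (List.ofFn fun i : Fin m => b i.succ).prod)
        = a 0 * (b 0 * (List.ofFn fun i : Fin m => a i.succ).prod) *
          (List.ofFn fun i : Fin m => b i.succ).prod := by group
      _ = a 0 * ((List.ofFn fun i : Fin m => a i.succ).prod * b 0) *
          (List.ofFn fun i : Fin m => b i.succ).prod := by rw [hc.eq]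
      _ = _ := by group

lemma aux_single : ∀ {r : ℕ} (i : Fin r) (x : M),
    (List.ofFn fun j => if j = i then x else 1).prod = x := by
  intro r
  induction r with
  | zero => exact fun i => i.elim0
  | succ m ih =>
    intro i x
    induction i using Fin.cases with
    | zero =>
      simp only [List.ofFn_succ, List.prod_cons]
      have : (List.ofFn fun j : Fin m => if j.succ = (0 : Fin (m+1)) then x else 1).prod = 1 := by
        have : (fun j : Fin m => if j.succ = (0 : Fin (m+1)) then x else 1) = fun _ => 1 := by
          funext j; simp [Fin.succ_ne_zero j]
        rw [this]; simp
      rw [this, mul_one]; simp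
    | succ k =>
      simp only [List.ofFn_succ, List.prod_cons]
      rw [if_neg (Fin.succ_ne_zero k).symm, one_mul]
      have : (fun j : Fin m => if j.succ = k.succ then x else 1)
          = fun j : Fin m => if j = k then x else 1 := by
        funext j; simp [Fin.succ_inj]
      rw [this, ih]

lemma aux_factor {r : ℕ} (G : Fin r → Subgroup M)
    (hcomm : ∀ i j, i ≠ j → ∀ x ∈ G i, ∀ y ∈ G j, Commute x y)
    {x : M} (hx : x ∈ ⨆ j, G j) :
    ∃ c : Fin r → M, (∀ j, c j ∈ G j) ∧ x = (List.ofFn c).prod := by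
  refine Subgroup.iSup_induction (C := fun y => ∃ c : Fin r → M, (∀ j, c j ∈ G j) ∧ y = (List.ofFn c).prod) G hx ?_ ?_ ?_
  · intro i y hy
    refine ⟨fun j => if j = i then y else 1, ?_, (aux_single i y).symm⟩
    intro j
    by_cases h : j = i
    · subst h; simpa using hy
    · simp only [if_neg h]; exact one_mem _
  · exact ⟨fun _ => 1, fun j => one_mem _, by simp⟩
  · rintro a b ⟨c, hc, hca⟩ ⟨d, hd, hdb⟩
    exact ⟨fun j => c j * d j, fun j => mul_mem (hc j) (hd j),
      by rw [hca, hdb, aux_ofFn_mul G hcomm c d hc hd]⟩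

lemma aux_inf_eq_iff (K C A : Subgroup M) :
    K ⊓ C = (K ⊓ A) ⊓ C ↔ ∀ x, x ∈ K ⊓ C → x ∈ A := by
  constructor
  · intro h x hx
    rw [h] at hx
    exact hx.1.2
  · intro h
    refine le_antisymm (fun x hx => ⟨⟨hx.1, h x hx⟩, hx.2⟩) ?_
    exact inf_le_inf_right C inf_le_left

end Aux

/-- Split classes in an internal direct product of subgroups of `S_n`, none
contained in `A_n`: the element `g = g_1⋯g_r` satisfies
`C_G(g) = C_{G∩A_n}(g)` iff each `g_j` lies in `A_n` and satisfies
`C_{G_j}(g_j) = C_{G_j∩A_n}(g_j)`. -/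
theorem stmt_11 (n r : ℕ) (G : Fin r → Subgroup (Equiv.Perm (Fin n)))
    (hne : ∀ j, ¬ G j ≤ alternatingGroup (Fin n))
    (hcomm : ∀ i j, i ≠ j → ∀ x ∈ G i, ∀ y ∈ G j, Commute x y)
    (hdirect : ∀ g g' : Fin r → Equiv.Perm (Fin n),
      (∀ j, g j ∈ G j) → (∀ j, g' j ∈ G j) →
      ((List.ofFn g).prod) = ((List.ofFn g').prod) → g = g')
    (g : Fin r → Equiv.Perm (Fin n)) (hg : ∀ j, g j ∈ G j)
    (hgA : ((List.ofFn g).prod) ∈ alternatingGroup (Fin n)) :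
    ((⨆ j, G j) ⊓ Subgroup.centralizer {(List.ofFn g).prod}
        = ((⨆ j, G j) ⊓ alternatingGroup (Fin n)) ⊓ Subgroup.centralizer {(List.ofFn g).prod})
      ↔ ∀ j, g j ∈ alternatingGroup (Fin n) ∧
          G j ⊓ Subgroup.centralizer {g j}
            = (G j ⊓ alternatingGroup (Fin n)) ⊓ Subgroup.centralizer {g j} := by
  set gp := (List.ofFn g).prod with hgp
  -- commuting with each g j implies commuting with gp
  have hcent : ∀ x : Equiv.Perm (Fin n), (∀ j, Commute x (g j)) → Commute x gp := by
    intro x hx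
    apply Commute.list_prod_right
    intro y hy
    rw [List.mem_ofFn] at hy
    obtain ⟨j, rfl⟩ := hy
    exact hx j
  rw [aux_inf_eq_iff]
  constructor
  · intro h j
    have hgjA : g j ∈ alternatingGroup (Fin n) := by
      apply h
      refine Subgroup.mem_inf.mpr ⟨Subgroup.mem_iSup_of_mem j (hg j),
        Subgroup.mem_centralizer_singleton_iff.mpr ?_⟩
      exact (hcent (g j) (fun i => by
        rcases eq_or_ne j i with rfl | hne'
        · exact Commute.refl _
        · exact hcomm j i hne' _ (hg j) _ (hg i))).eq
    refine ⟨hgjA, ?_⟩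
    rw [aux_inf_eq_iff]
    intro x hx
    apply h
    obtain ⟨hx1, hx2⟩ := Subgroup.mem_inf.mp hx
    refine Subgroup.mem_inf.mpr ⟨Subgroup.mem_iSup_of_mem j hx1,
      Subgroup.mem_centralizer_singleton_iff.mpr (hcent x (fun i => ?_)).eq⟩
    rcases eq_or_ne i j with rfl | hne'
    · exact Subgroup.mem_centralizer_singleton_iff.mp hx2
    · exact hcomm j i (Ne.symm hne') _ hx1 _ (hg i)
  · intro h x hx
    obtain ⟨hx1, hx2⟩ := Subgroup.mem_inf.mp hx
    obtain ⟨c, hc, rfl⟩ := aux_factor G hcomm hx1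
    have hcentx : (List.ofFn c).prod * gp = gp * (List.ofFn c).prod :=
      Subgroup.mem_centralizer_singleton_iff.mp hx2
    -- show each c j commutes with g j
    have key : ∀ j, c j * g j = g j * c j := by
      have h1 : (List.ofFn fun j => c j * g j).prod = (List.ofFn fun j => g j * c j).prod := by
        rw [aux_ofFn_mul G hcomm c g hc hg, aux_ofFn_mul G hcomm g c hg hc]
        exact hcentx
      have h2 := hdirect (fun j => c j * g j) (fun j => g j * c j)
        (fun j => mul_mem (hc j) (hg j)) (fun j => mul_mem (hg j) (hc j)) h1
      intro j
      exact congrFun h2 j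
    have hcjA : ∀ j, c j ∈ alternatingGroup (Fin n) := by
      intro j
      exact (aux_inf_eq_iff _ _ _).mp (h j).2 (c j)
        (Subgroup.mem_inf.mpr ⟨hc j, Subgroup.mem_centralizer_singleton_iff.mpr (key j)⟩)
    rw [Equiv.Perm.mem_alternatingGroup]
    rw [map_list_prod]
    apply List.prod_eq_one
    intro s hs
    simp only [List.map_ofFn] at hs
    rw [List.mem_ofFn] at hs
    obtain ⟨j, rfl⟩ := hs
    exact Equiv.Perm.mem_alternatingGroup.mp (hcjA j)
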